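/- Let v > 1 and μ ∈ ℝ. Then the equation Φ(x)/Φ_{μ,v}(x) = N(x)/N_{μ,v}(x) has a unique real solution α_{μ,v}. Moreover, for any s > Φ_{μ,v}^{-1}(Φ_{μ,v}(α_{μ,v})/Φ(α_{μ,v})), the equation (1 − Φ(x)) / (Φ_{μ,v}(s) − Φ_{μ,v}(x)) = N(x) / N_{μ,v}(x) has exactly two real solutions, and exactly the larger of the two solutions is greater than α_{μ,v}. -/

import Mathlib

open MeasureTheory

/-- Density of the normal distribution with mean `μ` and variance `v`. -/
noncomputable def nPDF (μ v x : ℝ) : ℝ :=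
  (Real.sqrt (2 * Real.pi * v))⁻¹ * Real.exp (-(x - μ) ^ 2 / (2 * v))

/-- Cumulative distribution function of the normal distribution with mean `μ`
and variance `v`. -/
noncomputable def nCDF (μ v x : ℝ) : ℝ := ∫ t in Set.Iic x, nPDF μ v t

open Set Filter Real Topology

variable {μ v : ℝ}

lemma nPDF_pos (hv : 0 < v) (x : ℝ) : 0 < nPDF μ v x := by
  have h2 : 0 < 2 * Real.pi * v := by positivity
  exact mul_pos (inv_pos.2 (Real.sqrt_pos.2 h2)) (Real.exp_pos _)

lemma continuous_nPDF : Continuous (nPDF μ v) := by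
  unfold nPDF; fun_prop

lemma integrable_nPDF (hv : 0 < v) : Integrable (nPDF μ v) := by
  have h : Integrable (fun x : ℝ => Real.exp (-(2*v)⁻¹ * x ^ 2)) :=
    integrable_exp_neg_mul_sq (by positivity)
  have h2 : Integrable (fun x : ℝ => Real.exp (-(2*v)⁻¹ * (x - μ) ^ 2)) :=
    h.comp_sub_right μ
  have := h2.const_mul ((Real.sqrt (2 * Real.pi * v))⁻¹)
  refine this.congr ?_
  filter_upwards with x
  unfold nPDF
  rw [neg_div, neg_mul]
  ring_nf

lemma integral_nPDF (hv : 0 < v) : ∫ x, nPDF μ v x = 1 := by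
  have h : (∫ x : ℝ, Real.exp (-(2*v)⁻¹ * (x - μ) ^ 2))
      = Real.sqrt (Real.pi / (2*v)⁻¹) := by
    rw [← integral_gaussian ((2*v)⁻¹)]
    simp_rw [sub_eq_add_neg]
    exact integral_add_right_eq_self (fun x => Real.exp (-(2*v)⁻¹ * x ^ 2)) (-μ)
  unfold nPDF
  have heq : ∀ x : ℝ, -(x - μ) ^ 2 / (2 * v) = -(2*v)⁻¹ * (x - μ)^2 := by
    intro x; field_simp
  simp_rw [heq]
  rw [integral_const_mul, h]
  rw [inv_mul_eq_one₀ (by positivity)]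
  congr 1
  field_simp


lemma nCDF_add_intervalIntegral (hv : 0 < v) (a x : ℝ) :
    nCDF μ v x = nCDF μ v a + ∫ t in a..x, nPDF μ v t := by
  have h := intervalIntegral.integral_Iic_sub_Iic
    ((integrable_nPDF hv (μ := μ)).integrableOn (s := Iic a))
    ((integrable_nPDF hv (μ := μ)).integrableOn (s := Iic x))
  unfold nCDF
  linarith [h]

lemma hasDerivAt_nCDF (hv : 0 < v) (x : ℝ) :
    HasDerivAt (nCDF μ v) (nPDF μ v x) x := by
  have key : ∀ y : ℝ, nCDF μ v y = nCDF μ v 0 + ∫ t in (0:ℝ)..y, nPDF μ v t :=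
    fun y => nCDF_add_intervalIntegral hv 0 y
  have h : HasDerivAt (fun y => ∫ t in (0:ℝ)..y, nPDF μ v t) (nPDF μ v x) x := by
    exact intervalIntegral.integral_hasDerivAt_right
      ((integrable_nPDF hv).intervalIntegrable)
      (continuous_nPDF.stronglyMeasurableAtFilter _ _)
      continuous_nPDF.continuousAt
  have := (h.const_add (nCDF μ v 0))
  refine HasDerivAt.congr_of_eventuallyEq this ?_
  filter_upwards with y using (key y)

lemma continuous_nCDF (hv : 0 < v) : Continuous (nCDF μ v) := by
  have : Differentiable ℝ (nCDF μ v) := fun x => (hasDerivAt_nCDF hv x).differentiableAt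
  exact this.continuous

lemma strictMono_nCDF (hv : 0 < v) : StrictMono (nCDF μ v) := by
  intro a b h
  rw [nCDF_add_intervalIntegral hv a b, lt_add_iff_pos_right]
  apply intervalIntegral.intervalIntegral_pos_of_pos_on
    ((integrable_nPDF hv).intervalIntegrable)
    (fun x _ => nPDF_pos hv x) h

lemma integrableOn_exp_mul_Iic' {L c : ℝ} (hL : 0 < L) :
    IntegrableOn (fun t => Real.exp (L * t)) (Iic c) := by
  have h := integrableOn_exp_Iic (L * c)
  rw [← integrable_indicator_iff measurableSet_Iic] at h
  have h2 := (integrable_comp_mul_left_iff ((Iic (L*c)).indicator Real.exp) hL.ne').2 h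
  refine (integrable_indicator_iff measurableSet_Iic).1 (h2.congr ?_)
  filter_upwards with t
  simp only [Set.indicator_apply, mem_Iic]
  rw [if_congr (mul_le_mul_iff_right₀ hL) rfl rfl]

lemma integral_exp_mul_Iic' {L c : ℝ} (hL : 0 < L) :
    ∫ t in Iic c, Real.exp (L * t) = Real.exp (L * c) / L := by
  have h := integral_Iic_of_hasDerivAt_of_tendsto'
    (f := fun t => Real.exp (L * t) / L) (f' := fun t => Real.exp (L * t)) (a := c) (m := 0)
    ?_ (integrableOn_exp_mul_Iic' hL) ?_
  · simpa using h
  · intro t _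
    have h1 : HasDerivAt (fun t : ℝ => L * t) L t := by
      simpa using (hasDerivAt_id t).const_mul L
    have h2 := (Real.hasDerivAt_exp (L * t)).comp t h1
    have h3 := h2.div_const L
    simpa [mul_div_assoc, mul_div_cancel_right₀ _ hL.ne'] using h3
  · have h1 : Tendsto (fun t : ℝ => L * t) atBot atBot :=
      tendsto_id.const_mul_atBot hL
    have := (Real.tendsto_exp_atBot.comp h1).div_const L
    simpa using this

lemma mills (hv : 0 < v) {x : ℝ} (hx : x < μ) :
    nCDF μ v x ≤ v / (μ - x) * nPDF μ v x := by
  set L : ℝ := (μ - x) / v with hL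
  have hLpos : 0 < L := div_pos (by linarith) hv
  set C : ℝ := nPDF μ v x * Real.exp (-(L * x)) with hC
  have hbound : ∀ t : ℝ, t ∈ Iic x → nPDF μ v t ≤ C * Real.exp (L * t) := by
    intro t _
    have key : -(t - μ) ^ 2 / (2 * v) ≤ -(x - μ) ^ 2 / (2 * v) + L * (t - x) := by
      have h : -(t - μ) ^ 2 / (2 * v) - (-(x - μ) ^ 2 / (2 * v) + (μ - x) / v * (t - x))
          = -(t - x)^2 / (2*v) := by field_simp; ring
      have h2 : -(t - x)^2 / (2*v) ≤ 0 :=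
        div_nonpos_of_nonpos_of_nonneg (neg_nonpos.2 (sq_nonneg _)) (by positivity)
      rw [hL]; linarith
    have := Real.exp_le_exp.2 key
    rw [Real.exp_add] at this
    calc nPDF μ v t = (Real.sqrt (2 * Real.pi * v))⁻¹ * Real.exp (-(t - μ) ^ 2 / (2 * v)) := rfl
      _ ≤ (Real.sqrt (2 * Real.pi * v))⁻¹ *
          (Real.exp (-(x - μ) ^ 2 / (2 * v)) * Real.exp (L * (t - x))) :=
        mul_le_mul_of_nonneg_left this (by positivity)
      _ = C * Real.exp (L * t) := by
        rw [hC]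
        rw [show L * (t - x) = -(L * x) + L * t by ring, Real.exp_add]
        unfold nPDF
        ring
  have hint : IntegrableOn (fun t => C * Real.exp (L * t)) (Iic x) :=
    (integrableOn_exp_mul_Iic' hLpos).const_mul C
  have hmono : nCDF μ v x ≤ ∫ t in Iic x, C * Real.exp (L * t) := by
    unfold nCDF
    exact setIntegral_mono_on ((integrable_nPDF hv).integrableOn) hint
      measurableSet_Iic hbound
  rw [MeasureTheory.integral_const_mul, integral_exp_mul_Iic' hLpos] at hmono
  refine hmono.trans (le_of_eq ?_)
  rw [hC]
  have h1 : Real.exp (-(L*x)) * (Real.exp (L*x)/L) = 1/L := by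
    rw [mul_div_assoc', ← Real.exp_add, neg_add_cancel, Real.exp_zero]
  rw [mul_assoc, h1, hL, one_div_div]
  ring

lemma nCDF_nonneg (hv : 0 < v) (x : ℝ) : 0 ≤ nCDF μ v x :=
  setIntegral_nonneg measurableSet_Iic (fun t _ => (nPDF_pos hv t).le)

lemma nCDF_pos (hv : 0 < v) (x : ℝ) : 0 < nCDF μ v x :=
  lt_of_le_of_lt (nCDF_nonneg hv (x - 1)) (strictMono_nCDF hv (by linarith))

lemma nPDF_le (hv : 0 < v) (x : ℝ) : nPDF μ v x ≤ (Real.sqrt (2 * Real.pi * v))⁻¹ := by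
  unfold nPDF
  have h : Real.exp (-(x - μ) ^ 2 / (2 * v)) ≤ 1 := by
    rw [Real.exp_le_one_iff]
    exact div_nonpos_of_nonpos_of_nonneg (neg_nonpos.2 (sq_nonneg _)) (by positivity)
  calc (Real.sqrt (2 * Real.pi * v))⁻¹ * Real.exp (-(x - μ) ^ 2 / (2 * v))
      ≤ (Real.sqrt (2 * Real.pi * v))⁻¹ * 1 := by
        apply mul_le_mul_of_nonneg_left h (by positivity)
    _ = _ := mul_one _

lemma tendsto_nCDF_atBot (hv : 0 < v) : Tendsto (nCDF μ v) atBot (𝓝 0) := by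
  have hup : Tendsto (fun x : ℝ => (v * (Real.sqrt (2 * Real.pi * v))⁻¹) / (μ - x))
      atBot (𝓝 0) := by
    apply Tendsto.div_atTop tendsto_const_nhds
    apply tendsto_atTop_add_const_left
    exact tendsto_neg_atBot_atTop
  refine tendsto_of_tendsto_of_tendsto_of_le_of_le' tendsto_const_nhds hup ?_ ?_
  · filter_upwards with x using nCDF_nonneg hv x
  · filter_upwards [Iio_mem_atBot μ] with x hx
    have h1 := mills hv (mem_Iio.1 hx)
    refine h1.trans ?_
    rw [show v / (μ - x) * nPDF μ v x = v * nPDF μ v x / (μ - x) by ring,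
      show v * (Real.sqrt (2 * Real.pi * v))⁻¹ / (μ - x)
        = v * (Real.sqrt (2 * Real.pi * v))⁻¹ / (μ - x) from rfl]
    gcongr
    · linarith [mem_Iio.1 hx]
    · exact nPDF_le hv x

lemma nPDF_neg (x : ℝ) : nPDF μ v (-x) = nPDF (-μ) v x := by
  unfold nPDF
  congr 1
  rw [show (-x - μ)^2 = (x - -μ)^2 by ring]

lemma nCDF_reflect (hv : 0 < v) (x : ℝ) : nCDF μ v x = 1 - nCDF (-μ) v (-x) := by
  have hsplit : nCDF μ v x + ∫ t in Ioi x, nPDF μ v t = 1 := by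
    unfold nCDF
    rw [intervalIntegral.integral_Iic_add_Ioi ((integrable_nPDF hv).integrableOn)
      ((integrable_nPDF hv).integrableOn), integral_nPDF hv]
  have hrefl : nCDF (-μ) v (-x) = ∫ t in Ioi x, nPDF μ v t := by
    unfold nCDF
    rw [← integral_comp_neg_Ioi]
    refine setIntegral_congr_fun measurableSet_Ioi (fun t _ => ?_)
    rw [nPDF_neg (μ := -μ), neg_neg]
  linarith [hsplit, hrefl]

lemma tendsto_nCDF_atTop (hv : 0 < v) : Tendsto (nCDF μ v) atTop (𝓝 1) := by
  have h : Tendsto (fun x : ℝ => 1 - nCDF (-μ) v (-x)) atTop (𝓝 (1 - 0)) := by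
    apply Tendsto.const_sub
    exact (tendsto_nCDF_atBot hv).comp tendsto_neg_atTop_atBot
  rw [sub_zero] at h
  exact h.congr (fun x => (nCDF_reflect hv x).symm)

lemma nCDF_lt_one (hv : 0 < v) (x : ℝ) : nCDF μ v x < 1 := by
  rw [nCDF_reflect hv x]
  linarith [nCDF_pos (μ := -μ) hv (-x)]

noncomputable def RR (μ v x : ℝ) : ℝ :=
  Real.sqrt v * Real.exp (-(x^2)/2 + (x-μ)^2/(2*v))

noncomputable def qd (μ v x : ℝ) : ℝ := -x + (x-μ)/v

lemma RR_pos (hv : 0 < v) (x : ℝ) : 0 < RR μ v x :=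
  mul_pos (Real.sqrt_pos.2 hv) (Real.exp_pos _)

lemma RR_mul (hv : 0 < v) (x : ℝ) : RR μ v x * nPDF μ v x = nPDF 0 1 x := by
  unfold RR nPDF
  rw [show (2 : ℝ) * Real.pi * 1 = 2 * Real.pi by ring]
  have hsq : Real.sqrt (2 * Real.pi * v) = Real.sqrt (2 * Real.pi) * Real.sqrt v :=
    Real.sqrt_mul (by positivity) v
  rw [hsq, mul_inv]
  have hv' : Real.sqrt v ≠ 0 := ne_of_gt (Real.sqrt_pos.2 hv)
  rw [show Real.sqrt v * Real.exp (-(x^2)/2 + (x-μ)^2/(2*v)) *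
      ((Real.sqrt (2*Real.pi))⁻¹ * (Real.sqrt v)⁻¹ * Real.exp (-(x-μ)^2/(2*v)))
      = (Real.sqrt v * (Real.sqrt v)⁻¹) * (Real.sqrt (2*Real.pi))⁻¹ *
        (Real.exp (-(x^2)/2 + (x-μ)^2/(2*v)) * Real.exp (-(x-μ)^2/(2*v))) by ring,
    mul_inv_cancel₀ hv', one_mul, ← Real.exp_add,
    show -(x^2)/2 + (x-μ)^2/(2*v) + -(x-μ)^2/(2*v) = -(x-0)^2/(2*1) by ring]

lemma RR_eq (hv : 0 < v) (x : ℝ) : nPDF 0 1 x / nPDF μ v x = RR μ v x := by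
  rw [← RR_mul hv x, mul_div_assoc, div_self (ne_of_gt (nPDF_pos hv x)), mul_one]

lemma hasDerivAt_RR (hv : 0 < v) (x : ℝ) :
    HasDerivAt (RR μ v) (qd μ v x * RR μ v x) x := by
  have h1 : HasDerivAt (fun x : ℝ => -(x^2)/2) (-x) x := by
    have := ((hasDerivAt_pow 2 x).div_const 2).neg
    have h2 : -(↑2 * x ^ (2-1) / 2) = -x := by norm_num
    simp only [neg_div] at this ⊢
    rw [← h2]
    exact this
  have h2 : HasDerivAt (fun x : ℝ => (x-μ)^2/(2*v)) ((x-μ)/v) x := by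
    have := (((hasDerivAt_id x).sub_const μ).pow 2).div_const (2*v)
    have heq : (↑2 * (x - μ) ^ (2-1) * 1) / (2*v) = (x-μ)/v := by
      field_simp; ring
    rw [← heq]
    exact this
  have h3 := (h1.add h2)
  have h4 := (Real.hasDerivAt_exp (-(x^2)/2 + (x-μ)^2/(2*v))).comp x h3
  have h5 := h4.const_mul (Real.sqrt v)
  refine h5.congr_deriv ?_
  unfold qd RR
  ring

lemma qd_pos_iff (hv1 : 1 < v) (x : ℝ) : 0 < qd μ v x ↔ x < μ / (1 - v) := by
  have hv : 0 < v := by linarith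
  unfold qd
  rw [lt_div_iff_of_neg (by linarith : 1 - v < 0)]
  constructor
  · intro h
    have := (lt_div_iff₀ hv).1 (by linarith [h] : x < (x - μ)/v)
    nlinarith
  · intro h
    have h2 : v * x < x - μ := by nlinarith
    have := (lt_div_iff₀ hv).2 (by linarith : x * v < x - μ)
    linarith [this]

lemma qd_neg_iff (hv1 : 1 < v) (x : ℝ) : qd μ v x < 0 ↔ μ / (1 - v) < x := by
  have hv : 0 < v := by linarith
  unfold qd
  rw [div_lt_iff_of_neg (by linarith : 1 - v < 0)]
  constructor
  · intro h
    have := (div_lt_iff₀ hv).1 (by linarith : (x - μ)/v < x)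
    nlinarith
  · intro h
    have := (div_lt_iff₀ hv).2 (by nlinarith : x - μ < x * v)
    linarith

lemma tendsto_expo_atTop (hv1 : 1 < v) :
    Tendsto (fun x : ℝ => -(x^2)/2 + (x-μ)^2/(2*v)) atTop atBot := by
  have hv : 0 < v := by linarith
  have ha : (1/(2*v) - 1/2 : ℝ) < 0 := by
    rw [sub_neg, div_lt_div_iff₀ (by positivity) (by norm_num)]
    linarith
  have h1 : Tendsto (fun x : ℝ => (1/(2*v) - 1/2)*x + (-μ/v)) atTop atBot := by
    apply tendsto_atBot_add_const_right
    exact (tendsto_const_mul_atBot_of_neg ha).2 tendsto_id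
  have h2 : Tendsto (fun x : ℝ => x * ((1/(2*v) - 1/2)*x + (-μ/v))) atTop atBot :=
    tendsto_id.atTop_mul_atBot₀ h1
  have h3 := tendsto_atBot_add_const_right atTop (μ^2/(2*v)) h2
  refine h3.congr (fun x => ?_)
  field_simp
  ring

lemma tendsto_expo_atBot (hv1 : 1 < v) :
    Tendsto (fun x : ℝ => -(x^2)/2 + (x-μ)^2/(2*v)) atBot atBot := by
  have hv : 0 < v := by linarith
  have ha : (1/(2*v) - 1/2 : ℝ) < 0 := by
    rw [sub_neg, div_lt_div_iff₀ (by positivity) (by norm_num)]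
    linarith
  have h1 : Tendsto (fun x : ℝ => (1/(2*v) - 1/2)*x + (-μ/v)) atBot atTop := by
    apply tendsto_atTop_add_const_right
    exact (tendsto_const_mul_atTop_of_neg ha).2 tendsto_id
  have h2 : Tendsto (fun x : ℝ => x * ((1/(2*v) - 1/2)*x + (-μ/v))) atBot atBot :=
    tendsto_id.atBot_mul_atTop₀ h1
  have h3 := tendsto_atBot_add_const_right atBot (μ^2/(2*v)) h2
  refine h3.congr (fun x => ?_)
  field_simp
  ring

lemma tendsto_RR_atTop (hv1 : 1 < v) : Tendsto (RR μ v) atTop (𝓝 0) := by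
  have := (Real.tendsto_exp_atBot.comp (tendsto_expo_atTop (μ := μ) hv1)).const_mul (Real.sqrt v)
  rw [mul_zero] at this
  exact this

lemma tendsto_RR_atBot (hv1 : 1 < v) : Tendsto (RR μ v) atBot (𝓝 0) := by
  have := (Real.tendsto_exp_atBot.comp (tendsto_expo_atBot (μ := μ) hv1)).const_mul (Real.sqrt v)
  refine this.congr (fun x => ?_) |>.mono_right (by simp)
  rfl

noncomputable def hF (μ v x : ℝ) : ℝ := nCDF 0 1 x - RR μ v x * nCDF μ v x

lemma hasDerivAt_hF (hv : 0 < v) (x : ℝ) :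
    HasDerivAt (hF μ v) (-(qd μ v x) * (RR μ v x * nCDF μ v x)) x := by
  have h01 := hasDerivAt_nCDF (μ := 0) (v := 1) one_pos x
  have hμ := hasDerivAt_nCDF (μ := μ) hv x
  have hR := hasDerivAt_RR (μ := μ) hv x
  have h := h01.sub (hR.mul hμ)
  refine h.congr_deriv ?_
  rw [← RR_mul hv x]
  ring

lemma tendsto_hF_atBot (hv1 : 1 < v) : Tendsto (hF μ v) atBot (𝓝 0) := by
  have hv : 0 < v := by linarith
  have h1 : Tendsto (nCDF 0 1) atBot (𝓝 0) := tendsto_nCDF_atBot one_pos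
  have h2 : Tendsto (fun x => RR μ v x * nCDF μ v x) atBot (𝓝 0) := by
    have hup : Tendsto (fun x : ℝ => (v * (Real.sqrt (2 * Real.pi * 1))⁻¹) / (μ - x))
        atBot (𝓝 0) := by
      apply Tendsto.div_atTop tendsto_const_nhds
      apply tendsto_atTop_add_const_left
      exact tendsto_neg_atBot_atTop
    refine tendsto_of_tendsto_of_tendsto_of_le_of_le' tendsto_const_nhds hup ?_ ?_
    · filter_upwards with x
      exact mul_nonneg (RR_pos hv x).le (nCDF_nonneg hv x)
    · filter_upwards [Iio_mem_atBot μ] with x hx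
      have hm := mills hv (mem_Iio.1 hx)
      have hxm : 0 < μ - x := by linarith [mem_Iio.1 hx]
      calc RR μ v x * nCDF μ v x
          ≤ RR μ v x * (v / (μ - x) * nPDF μ v x) :=
            mul_le_mul_of_nonneg_left hm (RR_pos hv x).le
        _ = v / (μ - x) * (RR μ v x * nPDF μ v x) := by ring
        _ = v / (μ - x) * nPDF 0 1 x := by rw [RR_mul hv x]
        _ ≤ v / (μ - x) * (Real.sqrt (2 * Real.pi * 1))⁻¹ :=
            mul_le_mul_of_nonneg_left (nPDF_le one_pos x) (by positivity)
        _ = (v * (Real.sqrt (2 * Real.pi * 1))⁻¹) / (μ - x) := by ring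
  have := h1.sub h2
  rw [sub_zero] at this
  exact this

lemma eventually_hF_pos (hv1 : 1 < v) : ∀ᶠ x in atTop, 0 < hF μ v x := by
  have hv : 0 < v := by linarith
  have h1 : Tendsto (fun x => nCDF 0 1 x - RR μ v x) atTop (𝓝 (1 - 0)) :=
    (tendsto_nCDF_atTop one_pos).sub (tendsto_RR_atTop hv1)
  rw [sub_zero] at h1
  filter_upwards [h1.eventually (eventually_gt_nhds (by norm_num : (1:ℝ)/2 < 1))] with x hx
  have h2 : RR μ v x * nCDF μ v x ≤ RR μ v x := by
    nth_rewrite 2 [← mul_one (RR μ v x)]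
    exact mul_le_mul_of_nonneg_left (nCDF_lt_one hv x).le (RR_pos hv x).le
  unfold hF
  linarith

lemma differentiable_hF (hv : 0 < v) : Differentiable ℝ (hF μ v) :=
  fun x => (hasDerivAt_hF hv x).differentiableAt

lemma deriv_hF (hv : 0 < v) (x : ℝ) :
    deriv (hF μ v) x = -(qd μ v x) * (RR μ v x * nCDF μ v x) :=
  (hasDerivAt_hF hv x).deriv

lemma strictAntiOn_hF (hv1 : 1 < v) : StrictAntiOn (hF μ v) (Iic (μ/(1-v))) := by
  have hv : 0 < v := by linarith
  apply strictAntiOn_of_deriv_neg (convex_Iic _)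
    (differentiable_hF hv).continuous.continuousOn
  intro x hx
  rw [interior_Iic] at hx
  rw [deriv_hF hv x]
  have hq : 0 < qd μ v x := (qd_pos_iff hv1 x).2 hx
  have := mul_pos (RR_pos (μ := μ) hv x) (nCDF_pos (μ := μ) hv x)
  nlinarith

lemma strictMonoOn_hF (hv1 : 1 < v) : StrictMonoOn (hF μ v) (Ici (μ/(1-v))) := by
  have hv : 0 < v := by linarith
  apply strictMonoOn_of_deriv_pos (convex_Ici _)
    (differentiable_hF hv).continuous.continuousOn
  intro x hx
  rw [interior_Ici] at hx
  rw [deriv_hF hv x]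
  have hq : qd μ v x < 0 := (qd_neg_iff hv1 x).2 hx
  have := mul_pos (RR_pos (μ := μ) hv x) (nCDF_pos (μ := μ) hv x)
  nlinarith

lemma hF_neg_of_le (hv1 : 1 < v) {x : ℝ} (hx : x ≤ μ/(1-v)) : hF μ v x < 0 := by
  have hv : 0 < v := by linarith
  have hle : hF μ v (x - 1) ≤ 0 := by
    refine ge_of_tendsto (tendsto_hF_atBot (μ := μ) hv1) ?_
    filter_upwards [Iio_mem_atBot (x - 1)] with t ht
    exact ((strictAntiOn_hF hv1) (by simp only [mem_Iic]; linarith [mem_Iio.1 ht])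
      (by simp only [mem_Iic]; linarith) (mem_Iio.1 ht)).le
  have := (strictAntiOn_hF hv1) (by simp only [mem_Iic]; linarith)
    (by simp only [mem_Iic]; exact hx) (by linarith : x - 1 < x)
  linarith

lemma exists_alpha (hv1 : 1 < v) :
    ∃ α : ℝ, μ/(1-v) < α ∧ ∀ x : ℝ, hF μ v x = 0 ↔ x = α := by
  have hv : 0 < v := by linarith
  obtain ⟨x0, hx0pos, hx0gt⟩ : ∃ x0 : ℝ, 0 < hF μ v x0 ∧ μ/(1-v) < x0 := by
    obtain ⟨x0, h1, h2⟩ := ((eventually_hF_pos hv1).and (eventually_gt_atTop (μ/(1-v)))).exists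
    exact ⟨x0, h1, h2⟩
  have hIVT := intermediate_value_Icc (f := hF μ v) hx0gt.le
    ((differentiable_hF hv).continuous.continuousOn)
  have h0mem : (0:ℝ) ∈ Icc (hF μ v (μ/(1-v))) (hF μ v x0) :=
    ⟨(hF_neg_of_le hv1 le_rfl).le, hx0pos.le⟩
  obtain ⟨α, hαmem, hα0⟩ := hIVT h0mem
  have hαgt : μ/(1-v) < α := by
    rcases eq_or_lt_of_le hαmem.1 with h | h
    · exfalso; rw [← h] at hα0; exact absurd hα0 (ne_of_lt (hF_neg_of_le hv1 le_rfl))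
    · exact h
  refine ⟨α, hαgt, fun x => ⟨fun hx => ?_, fun hx => hx ▸ hα0⟩⟩
  by_contra hne
  have hxgt : μ/(1-v) < x := by
    by_contra hle
    exact absurd hx (ne_of_lt (hF_neg_of_le hv1 (not_lt.1 hle)))
  exact hne ((strictMonoOn_hF hv1).injOn (mem_Ici.2 hxgt.le) (mem_Ici.2 hαgt.le)
    (by rw [hx, hα0]))

noncomputable def kF (μ v c x : ℝ) : ℝ := (1 - nCDF 0 1 x) - RR μ v x * (c - nCDF μ v x)

lemma hasDerivAt_kF (hv : 0 < v) (c x : ℝ) :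
    HasDerivAt (kF μ v c) (-(qd μ v x) * (RR μ v x * (c - nCDF μ v x))) x := by
  have h01 := (hasDerivAt_nCDF (μ := 0) (v := 1) one_pos x).const_sub 1
  have hμ := (hasDerivAt_nCDF (μ := μ) hv x).const_sub c
  have hR := hasDerivAt_RR (μ := μ) hv x
  have h := h01.sub (hR.mul hμ)
  refine h.congr_deriv ?_
  rw [← RR_mul hv x]
  ring

lemma differentiable_kF (hv : 0 < v) (c : ℝ) : Differentiable ℝ (kF μ v c) :=
  fun x => (hasDerivAt_kF hv c x).differentiableAt

lemma deriv_kF (hv : 0 < v) (c x : ℝ) :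
    deriv (kF μ v c) x = -(qd μ v x) * (RR μ v x * (c - nCDF μ v x)) :=
  (hasDerivAt_kF hv c x).deriv

lemma strictAntiOn_kF (hv1 : 1 < v) {c : ℝ} (hc : nCDF μ v (μ/(1-v)) < c) :
    StrictAntiOn (kF μ v c) (Iic (μ/(1-v))) := by
  have hv : 0 < v := by linarith
  apply strictAntiOn_of_deriv_neg (convex_Iic _)
    (differentiable_kF hv c).continuous.continuousOn
  intro x hx
  rw [interior_Iic] at hx
  rw [deriv_kF hv c x]
  have hq : 0 < qd μ v x := (qd_pos_iff hv1 x).2 hx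
  have hlt : nCDF μ v x < c := lt_trans (strictMono_nCDF hv hx) hc
  have := mul_pos (RR_pos (μ := μ) hv x) (by linarith : 0 < c - nCDF μ v x)
  nlinarith

lemma strictMonoOn_kF (hv1 : 1 < v) {s : ℝ} (hs : μ/(1-v) < s) :
    StrictMonoOn (kF μ v (nCDF μ v s)) (Icc (μ/(1-v)) s) := by
  have hv : 0 < v := by linarith
  apply strictMonoOn_of_deriv_pos (convex_Icc _ _)
    (differentiable_kF hv _).continuous.continuousOn
  intro x hx
  rw [interior_Icc] at hx
  rw [deriv_kF hv _ x]
  have hq : qd μ v x < 0 := (qd_neg_iff hv1 x).2 hx.1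
  have hlt : nCDF μ v x < nCDF μ v s := strictMono_nCDF hv hx.2
  have := mul_pos (RR_pos (μ := μ) hv x) (by linarith : 0 < nCDF μ v s - nCDF μ v x)
  nlinarith

lemma tendsto_kF_atBot (hv1 : 1 < v) {c : ℝ} (hc0 : 0 ≤ c) (hc1 : c ≤ 1) :
    Tendsto (kF μ v c) atBot (𝓝 1) := by
  have hv : 0 < v := by linarith
  have h1 : Tendsto (fun x => 1 - nCDF 0 1 x) atBot (𝓝 (1 - 0)) :=
    (tendsto_nCDF_atBot one_pos).const_sub 1
  rw [sub_zero] at h1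
  have h2 : Tendsto (fun x => RR μ v x * (c - nCDF μ v x)) atBot (𝓝 0) := by
    rw [tendsto_zero_iff_norm_tendsto_zero]
    refine squeeze_zero (fun x => norm_nonneg _) (fun x => ?_) (tendsto_RR_atBot (μ := μ) hv1)
    rw [norm_mul, Real.norm_eq_abs, Real.norm_eq_abs,
      abs_of_pos (RR_pos (μ := μ) hv x)]
    nth_rewrite 2 [← mul_one (RR μ v x)]
    apply mul_le_mul_of_nonneg_left _ (RR_pos (μ := μ) hv x).le
    rw [abs_le]
    constructor
    · linarith [nCDF_lt_one (μ := μ) hv x]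
    · linarith [nCDF_nonneg (μ := μ) hv x]
  have := h1.sub h2
  rw [sub_zero] at this
  exact this.congr (fun x => rfl)

lemma kF_pos_of_ge (hv : 0 < v) {s x : ℝ} (hx : s ≤ x) : 0 < kF μ v (nCDF μ v s) x := by
  have h1 : nCDF μ v s - nCDF μ v x ≤ 0 := by
    rcases eq_or_lt_of_le hx with h | h
    · rw [h]; simp
    · linarith [strictMono_nCDF (μ := μ) hv h]
  have h2 : RR μ v x * (nCDF μ v s - nCDF μ v x) ≤ 0 :=
    mul_nonpos_of_nonneg_of_nonpos (RR_pos hv x).le h1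
  have h3 : nCDF 0 1 x < 1 := nCDF_lt_one one_pos x
  unfold kF
  linarith


/-- Lemma 3: for `v > 1`, the equation `Φ(x)/Φ_{μ,v}(x) = N(x)/N_{μ,v}(x)` has a
unique real solution `α`.  Moreover, for any `s` with
`s > Φ_{μ,v}^{-1}(Φ_{μ,v}(α)/Φ(α))` (equivalently, `Φ_{μ,v}(s) > Φ_{μ,v}(α)/Φ(α)`
since `Φ_{μ,v}` is a strictly increasing bijection onto `(0,1)`), the equation
`(1 − Φ(x)) / (Φ_{μ,v}(s) − Φ_{μ,v}(x)) = N(x) / N_{μ,v}(x)` has exactly two real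
solutions, and exactly the larger of the two is greater than `α`. -/
theorem unique_solution_gt_one (v μ : ℝ) (hv : 1 < v) :
    ∃ α : ℝ,
      (∀ x : ℝ, nCDF 0 1 x / nCDF μ v x = nPDF 0 1 x / nPDF μ v x ↔ x = α) ∧
      ∀ s : ℝ, nCDF μ v α / nCDF 0 1 α < nCDF μ v s →
        ∃ β' β : ℝ, β' < β ∧
          (∀ x : ℝ,
            (1 - nCDF 0 1 x) / (nCDF μ v s - nCDF μ v x) = nPDF 0 1 x / nPDF μ v x ↔
              (x = β' ∨ x = β)) ∧
          α < β ∧ β' ≤ α := by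
  have hv0 : 0 < v := by linarith
  obtain ⟨α, hαgt, hαiff⟩ := exists_alpha (μ := μ) hv
  have hα0 : hF μ v α = 0 := (hαiff α).2 rfl
  have heq1 : ∀ x : ℝ, nCDF 0 1 x / nCDF μ v x = nPDF 0 1 x / nPDF μ v x ↔ hF μ v x = 0 := by
    intro x
    rw [RR_eq hv0 x, div_eq_iff (ne_of_gt (nCDF_pos hv0 x))]
    unfold hF
    constructor <;> intro h <;> linarith
  refine ⟨α, fun x => (heq1 x).trans (hαiff x), ?_⟩
  intro s hs
  set c := nCDF μ v s with hc
  have hΦα : 0 < nCDF μ v α := nCDF_pos hv0 α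
  have hΦ01α : 0 < nCDF 0 1 α := nCDF_pos one_pos α
  have h01lt : nCDF 0 1 α < 1 := nCDF_lt_one one_pos α
  have hRα : nCDF 0 1 α = RR μ v α * nCDF μ v α := by
    unfold hF at hα0; linarith
  have hcα : nCDF μ v α < c := by
    calc nCDF μ v α < nCDF μ v α / nCDF 0 1 α := by
          rw [lt_div_iff₀ hΦ01α]; nlinarith
      _ < c := hs
  have hαs : α < s := (strictMono_nCDF hv0).lt_iff_lt.1 hcα
  have hkα : kF μ v c α < 0 := by
    have hRmul : 1 < RR μ v α * c := by
      have h1 : nCDF μ v α < c * nCDF 0 1 α := (div_lt_iff₀ hΦ01α).1 hs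
      have hRαval : RR μ v α = nCDF 0 1 α / nCDF μ v α := by
        rw [eq_div_iff hΦα.ne']; linarith
      rw [hRαval, div_mul_eq_mul_div, lt_div_iff₀ hΦα]
      nlinarith
    unfold kF
    nlinarith [hRα]
  have hks : 0 < kF μ v c s := kF_pos_of_ge hv0 le_rfl
  have hxs_s : μ/(1-v) < s := lt_trans hαgt hαs
  have hanti : StrictAntiOn (kF μ v c) (Iic (μ/(1-v))) :=
    strictAntiOn_kF hv (lt_trans (strictMono_nCDF hv0 hαgt) hcα)
  have hmono : StrictMonoOn (kF μ v c) (Icc (μ/(1-v)) s) := strictMonoOn_kF hv hxs_s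
  have hkxstar : kF μ v c (μ/(1-v)) < 0 :=
    lt_trans (hmono ⟨le_rfl, hxs_s.le⟩ ⟨hαgt.le, hαs.le⟩ hαgt) hkα
  obtain ⟨x1, hx1pos, hx1lt⟩ :=
    (((tendsto_kF_atBot hv (nCDF_nonneg hv0 s) (nCDF_lt_one hv0 s).le).eventually
      (eventually_gt_nhds (by norm_num : (0:ℝ) < 1))).and
      (eventually_lt_atBot (μ/(1-v)))).exists
  have hcont : ContinuousOn (kF μ v c) (Icc x1 (μ/(1-v))) :=
    (differentiable_kF hv0 c).continuous.continuousOn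
  have hcont2 : ContinuousOn (kF μ v c) (Icc α s) :=
    (differentiable_kF hv0 c).continuous.continuousOn
  obtain ⟨β', hβ'mem, hβ'0⟩ :=
    intermediate_value_Icc' (f := kF μ v c) hx1lt.le hcont ⟨hkxstar.le, hx1pos.le⟩
  obtain ⟨β, hβmem, hβ0⟩ :=
    intermediate_value_Icc (f := kF μ v c) hαs.le hcont2 ⟨hkα.le, hks.le⟩
  have hβ'lt : β' < μ/(1-v) := by
    rcases eq_or_lt_of_le hβ'mem.2 with h | h
    · exfalso; rw [h] at hβ'0; exact absurd hβ'0 (ne_of_lt hkxstar)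
    · exact h
  have hαβ : α < β := by
    rcases eq_or_lt_of_le hβmem.1 with h | h
    · exfalso; rw [← h] at hβ0; exact absurd hβ0 (ne_of_lt hkα)
    · exact h
  have hβs : β < s := by
    rcases eq_or_lt_of_le hβmem.2 with h | h
    · exfalso; rw [h] at hβ0; exact absurd hβ0 (ne_of_gt hks)
    · exact h
  refine ⟨β', β, by linarith, ?_, hαβ, by linarith⟩
  intro x
  have heq2 : (1 - nCDF 0 1 x) / (c - nCDF μ v x) = nPDF 0 1 x / nPDF μ v x ↔
      kF μ v c x = 0 := by
    rw [RR_eq hv0 x]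
    constructor
    · intro h
      by_cases hd : c - nCDF μ v x = 0
      · rw [hd, div_zero] at h
        exact absurd h.symm (ne_of_gt (RR_pos hv0 x))
      · have := (div_eq_iff hd).1 h
        unfold kF; linarith
    · intro h
      have hd : c - nCDF μ v x ≠ 0 := by
        intro hd
        unfold kF at h
        rw [hd, mul_zero, sub_zero] at h
        have := nCDF_lt_one (μ := 0) (v := 1) one_pos x
        linarith
      rw [div_eq_iff hd]
      unfold kF at h; linarith
  rw [heq2]
  constructor
  · intro h
    rcases le_or_gt x (μ/(1-v)) with hx | hx
    · left
      exact hanti.injOn (mem_Iic.2 hx) (mem_Iic.2 hβ'lt.le) (by rw [h, hβ'0])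
    · right
      have hxlts : x < s := by
        by_contra hge
        exact absurd h (ne_of_gt (kF_pos_of_ge hv0 (not_lt.1 hge)))
      exact hmono.injOn ⟨hx.le, hxlts.le⟩ ⟨by linarith, hβs.le⟩ (by rw [h, hβ0])
  · rintro (rfl | rfl)
    exacts [hβ'0, hβ0]
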